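/- arXiv:2107.10446 — 3 statements merged into one kernel-verified Lean document; each statement's English description precedes it below -/
import Mathlib

section
/- Let K, Z, N be positive integers and let x^Q ∈ {0, 1/K, 2/K, ..., 1}^N with Σ_n x^Q_n ≤ Z. Then there exist binary vectors R_1, ..., R_K ∈ {0,1}^N such that Σ_{k=1}^K r_{k,n} = K x^Q_n for every n, and Σ_{n=1}^N r_{k,n} ≤ Z for every k. -/
/-- A fractional caching vector whose entries are multiples of `1/K` with total mass
at most `Z` can be decomposed into `K` capacity-feasible binary caching vectors. -/
theorem stmt_11 (K Z N : ℕ) (hK : 0 < K) (hZ : 0 < Z) (hN : 0 < N)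
    (xQ : Fin N → ℝ)
    (hxQ : ∀ n, ∃ j : ℕ, j ≤ K ∧ xQ n = (j : ℝ) / K)
    (hsum : ∑ n, xQ n ≤ Z) :
    ∃ r : Fin K → Fin N → ℝ,
      (∀ k n, r k n = 0 ∨ r k n = 1) ∧
      (∀ n, ∑ k, r k n = K * xQ n) ∧
      (∀ k, ∑ n, r k n ≤ Z) := by
  choose j hjK hjx using hxQ
  set J : ℕ → ℕ := fun m => if h : m < N then j ⟨m, h⟩ else 0 with hJdef
  set S : ℕ → ℕ := fun n => ∑ m ∈ Finset.range n, J m with hSdef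
  have hSsucc : ∀ n, S (n + 1) = S n + J n := fun n => Finset.sum_range_succ J n
  have hJfin : ∀ n : Fin N, J n.val = j n := by
    intro n; simp [hJdef, n.isLt]
  set rN : Fin K → Fin N → ℕ := fun k n =>
    ((Finset.Ico (S n.val) (S (n.val + 1))).filter (fun t => t % K = k.val)).card with hrdef
  have hcard01 : ∀ k n, rN k n ≤ 1 := by
    intro k n
    apply Finset.card_le_one.mpr
    intro a ha b hb
    simp only [Finset.mem_filter, Finset.mem_Ico] at ha hb
    have hlen : S (n.val + 1) = S n.val + J n.val := hSsucc n.val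
    have hJle : J n.val ≤ K := by rw [hJfin]; exact hjK n
    rcases le_total a b with hab | hab
    · have hdvd : K ∣ b - a := (Nat.modEq_iff_dvd' hab).mp (ha.2.trans hb.2.symm)
      have hlt : b - a < K := by omega
      have := Nat.eq_zero_of_dvd_of_lt hdvd hlt
      omega
    · have hdvd : K ∣ a - b := (Nat.modEq_iff_dvd' hab).mp (hb.2.trans ha.2.symm)
      have hlt : a - b < K := by omega
      have := Nat.eq_zero_of_dvd_of_lt hdvd hlt
      omega
  have hcol : ∀ n : Fin N, ∑ k : Fin K, rN k n = j n := by
    intro n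
    have hfib : (Finset.Ico (S n.val) (S (n.val + 1))).card
        = ∑ k : Fin K, rN k n := by
      rw [Finset.card_eq_sum_card_fiberwise
        (f := fun t => (⟨t % K, Nat.mod_lt t hK⟩ : Fin K))
        (t := Finset.univ) (fun x _ => Finset.mem_univ _)]
      apply Finset.sum_congr rfl
      intro k _
      congr 1
      apply Finset.filter_congr
      intro t _
      simp [Fin.ext_iff]
    have hcard : (Finset.Ico (S n.val) (S (n.val + 1))).card = J n.val := by
      rw [Nat.card_Ico, hSsucc]; omega
    rw [← hfib, hcard, hJfin]
  -- total mass bound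
  have hSN : S N ≤ K * Z := by
    have h1 : (∑ n : Fin N, (j n : ℝ)) / K ≤ Z := by
      calc (∑ n : Fin N, (j n : ℝ)) / K = ∑ n, xQ n := by
            rw [Finset.sum_div]; exact Finset.sum_congr rfl fun n _ => (hjx n).symm
        _ ≤ Z := hsum
    have h2 : (∑ n : Fin N, (j n : ℝ)) ≤ K * Z := by
      have hKpos : (0 : ℝ) < K := by exact_mod_cast hK
      rw [div_le_iff₀ hKpos] at h1
      linarith [h1]
    have h3 : ((∑ n : Fin N, j n : ℕ) : ℝ) ≤ ((K * Z : ℕ) : ℝ) := by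
      push_cast; exact h2
    have h4 : (∑ n : Fin N, j n) ≤ K * Z := by exact_mod_cast h3
    have h5 : S N = ∑ n : Fin N, j n := by
      have h0 : S N = ∑ m ∈ Finset.range N, J m := rfl
      rw [h0, ← Fin.sum_univ_eq_sum_range J N]
      exact Finset.sum_congr rfl fun n _ => hJfin n
    omega
  have hrow : ∀ k : Fin K, ∑ n : Fin N, rN k n ≤ Z := by
    intro k
    have hind : ∀ m, ∑ i ∈ Finset.range m,
        ((Finset.Ico (S i) (S (i + 1))).filter (fun t => t % K = k.val)).card
        = ((Finset.Ico 0 (S m)).filter (fun t => t % K = k.val)).card := by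
      intro m
      induction m with
      | zero => simp [hSdef]
      | succ m ih =>
        rw [Finset.sum_range_succ, ih]
        have hmono : S m ≤ S (m + 1) := by rw [hSsucc]; omega
        have hsplit : Finset.Ico 0 (S m) ∪ Finset.Ico (S m) (S (m + 1))
            = Finset.Ico 0 (S (m + 1)) :=
          Finset.Ico_union_Ico_eq_Ico (Nat.zero_le _) hmono
        have hdisj : Disjoint ((Finset.Ico 0 (S m)).filter (fun t => t % K = k.val))
            ((Finset.Ico (S m) (S (m + 1))).filter (fun t => t % K = k.val)) := by
          apply Finset.disjoint_filter_filter
          apply Finset.Ico_disjoint_Ico_consecutive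
        rw [← hsplit, Finset.filter_union, Finset.card_union_of_disjoint hdisj]
    have heq : ∑ n : Fin N, rN k n
        = ((Finset.Ico 0 (S N)).filter (fun t => t % K = k.val)).card := by
      rw [← hind N]
      exact Fin.sum_univ_eq_sum_range
        (fun i => ((Finset.Ico (S i) (S (i + 1))).filter (fun t => t % K = k.val)).card) N
    rw [heq]
    have : ((Finset.Ico 0 (S N)).filter (fun t => t % K = k.val)).card
        ≤ (Finset.range Z).card := by
      apply Finset.card_le_card_of_injOn (fun t => t / K)
      · intro t ht
        simp only [Finset.mem_coe, Finset.mem_filter, Finset.mem_Ico] at ht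
        simp only [Finset.mem_coe, Finset.mem_range]
        have htlt : t < K * Z := lt_of_lt_of_le ht.1.2 hSN
        exact Nat.div_lt_of_lt_mul htlt
      · intro a ha b hb hab
        simp only [Finset.coe_filter, Set.mem_setOf_eq, Finset.mem_Ico] at ha hb
        have hab' : a / K = b / K := hab
        calc a = K * (a / K) + a % K := (Nat.div_add_mod a K).symm
          _ = K * (b / K) + b % K := by rw [hab', ha.2, hb.2]
          _ = b := Nat.div_add_mod b K
    simpa using this
  refine ⟨fun k n => (rN k n : ℝ), ?_, ?_, ?_⟩
  · intro k n
    have := hcard01 k n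
    interval_cases h : rN k n <;> simp_all
  · intro n
    have : ∑ k : Fin K, ((rN k n : ℝ)) = (j n : ℝ) := by
      rw [← Nat.cast_sum, hcol n]
    rw [this, hjx n]
    field_simp
  · intro k
    have h := hrow k
    calc ∑ n : Fin N, ((rN k n : ℝ)) = ((∑ n : Fin N, rN k n : ℕ) : ℝ) := by push_cast; ring
      _ ≤ Z := by exact_mod_cast h
end

section
/- Consider the greedy routing solution: with services sorted so d_1 ≥ ... ≥ d_N, set y_n = x_n as long as J(Y) < d_n, and at the first n where raising y_n to x_n would make J(Y) > d_n, choose y_n ∈ [0, x_n] with J(Y) = d_n, setting all subsequent y_m = 0. Then this Y minimizes L(Y) = Σ_n λ_n y_n C(Σ_m λ_m y_m) + Σ_n λ_n(1−y_n)d_n over {Y : 0 ≤ y_n ≤ x_n}. -/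
/-- Tangent line inequality for a convex differentiable function on `Ici 0`. -/
lemma tangent_le {C : ℝ → ℝ} (hCconv : ConvexOn ℝ (Set.Ici (0 : ℝ)) C)
    (hCdiff : Differentiable ℝ C) {a b : ℝ} (ha : 0 ≤ a) (hb : 0 ≤ b) :
    C a + deriv C a * (b - a) ≤ C b := by
  rcases lt_trichotomy a b with h | h | h
  · have := hCconv.deriv_le_slope ha hb h (hCdiff a)
    rw [slope_def_field, le_div_iff₀ (by linarith : (0:ℝ) < b - a)] at this
    linarith
  · simp [h]
  · have := hCconv.slope_le_deriv hb ha h (hCdiff a)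
    rw [slope_def_field, div_le_iff₀ (by linarith : (0:ℝ) < a - b)] at this
    linarith

/-- Optimality of the greedy routing solution: if services are sorted with `d`
decreasing and the routing vector `Y` satisfies the greedy threshold structure
(`y_n = x_n` whenever `d_n > J(Y)` and `y_n = 0` whenever `d_n < J(Y)`), then `Y`
minimizes the total latency `L` over `{Y' : 0 ≤ y'_n ≤ x_n}`. -/
theorem stmt_14 (N : ℕ) (C : ℝ → ℝ)
    (hCconv : ConvexOn ℝ (Set.Ici (0 : ℝ)) C)
    (hCmono : MonotoneOn C (Set.Ici (0 : ℝ)))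
    (hCdiff : Differentiable ℝ C)
    (lam d x Y : Fin N → ℝ)
    (hlam : ∀ n, 0 ≤ lam n) (hx : ∀ n, 0 ≤ x n)
    (hd : ∀ n, C 0 ≤ d n) (hsorted : Antitone d)
    (hfeas : ∀ n, 0 ≤ Y n ∧ Y n ≤ x n)
    (hgreedy1 : ∀ n,
      (C (∑ m, lam m * Y m) + (∑ m, lam m * Y m) * deriv C (∑ m, lam m * Y m)) < d n →
        Y n = x n)
    (hgreedy2 : ∀ n,
      d n < (C (∑ m, lam m * Y m) + (∑ m, lam m * Y m) * deriv C (∑ m, lam m * Y m)) →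
        Y n = 0) :
    ∀ Y' : Fin N → ℝ, (∀ n, 0 ≤ Y' n ∧ Y' n ≤ x n) →
      ((∑ n, lam n * Y n * C (∑ m, lam m * Y m)) + ∑ n, lam n * (1 - Y n) * d n) ≤
      ((∑ n, lam n * Y' n * C (∑ m, lam m * Y' m)) + ∑ n, lam n * (1 - Y' n) * d n) := by
  intro Y' hfeas'
  set S : ℝ := ∑ m, lam m * Y m with hS
  set S' : ℝ := ∑ m, lam m * Y' m with hS'
  set J : ℝ := C S + S * deriv C S with hJ
  have hSnn : 0 ≤ S := Finset.sum_nonneg fun n _ => mul_nonneg (hlam n) (hfeas n).1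
  have hS'nn : 0 ≤ S' := Finset.sum_nonneg fun n _ => mul_nonneg (hlam n) (hfeas' n).1
  -- key convexity bound: S' * C S' - S * C S ≥ J * (S' - S)
  have hkey : J * (S' - S) ≤ S' * C S' - S * C S := by
    rcases eq_or_lt_of_le hSnn with h0 | hpos
    · -- S = 0, so J = C 0 and we only need monotonicity
      have hC0 : C S ≤ C S' := hCmono (Set.mem_Ici.2 hSnn) (Set.mem_Ici.2 hS'nn)
        (by rw [← h0]; exact hS'nn)
      have hJ0 : J = C S := by rw [hJ, ← h0]; ring
      rw [← h0] at hC0 ⊢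
      rw [hJ0, ← h0]
      nlinarith [mul_le_mul_of_nonneg_left hC0 hS'nn]
    · -- S > 0 : tangent line plus deriv C S ≥ 0
      have htan := tangent_le hCconv hCdiff hSnn hS'nn
      have hderiv : 0 ≤ deriv C S := by
        have hsl := hCconv.slope_le_deriv (Set.mem_Ici.2 le_rfl) (Set.mem_Ici.2 hSnn)
          hpos (hCdiff S)
        rw [slope_def_field] at hsl
        have : 0 ≤ (C S - C 0) / (S - 0) := by
          apply div_nonneg _ (by linarith)
          have := hCmono (Set.mem_Ici.2 le_rfl) (Set.mem_Ici.2 hSnn) hSnn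
          linarith
        linarith
      nlinarith [mul_le_mul_of_nonneg_left htan hS'nn, sq_nonneg (S' - S)]
  -- termwise: lam n * (Y' n - Y n) * (J - d n) ≥ 0
  have hterm : ∀ n, 0 ≤ lam n * (Y' n - Y n) * (J - d n) := by
    intro n
    rcases lt_trichotomy (d n) J with h | h | h
    · have hYn : Y n = 0 := hgreedy2 n h
      have := (hfeas' n).1
      apply mul_nonneg (mul_nonneg (hlam n) (by rw [hYn]; linarith)) (by linarith)
    · rw [← h, sub_self, mul_zero]
    · have hYn : Y n = x n := hgreedy1 n h
      have h1 : Y' n - Y n ≤ 0 := by rw [hYn]; linarith [(hfeas' n).2]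
      have h2 : J - d n ≤ 0 := by linarith
      nlinarith [mul_nonneg (hlam n) (mul_nonneg (neg_nonneg.2 h1) (neg_nonneg.2 h2))]
  have hsum : 0 ≤ ∑ n, lam n * (Y' n - Y n) * (J - d n) :=
    Finset.sum_nonneg fun n _ => hterm n
  -- expand the sum
  have hexp : ∑ n, lam n * (Y' n - Y n) * (J - d n)
      = S' * J - S * J - (∑ n, lam n * Y' n * d n) + ∑ n, lam n * Y n * d n := by
    rw [hS, hS', Finset.sum_mul, Finset.sum_mul]
    simp only [← Finset.sum_sub_distrib, ← Finset.sum_add_distrib]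
    exact Finset.sum_congr rfl fun n _ => by ring
  have hCsum : ∑ n, lam n * Y n * C S = S * C S := by
    rw [hS, Finset.sum_mul]
  have hCsum' : ∑ n, lam n * Y' n * C S' = S' * C S' := by
    rw [hS', Finset.sum_mul]
  have hdsum : ∀ Z : Fin N → ℝ, ∑ n, lam n * (1 - Z n) * d n
      = ∑ n, lam n * d n - ∑ n, lam n * Z n * d n := by
    intro Z
    rw [← Finset.sum_sub_distrib]
    exact Finset.sum_congr rfl fun n _ => by ring
  rw [hCsum, hCsum', hdsum Y, hdsum Y']
  rw [hexp] at hsum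
  linarith
end

section
/- Let v ∈ ℝ^N and define x'_n = min(1, max(0, v_n)). If Σ_n x'_n ≤ Z, then X' is the Euclidean projection of v onto the set S = {X ∈ ℝ^N : 0 ≤ x_n ≤ 1, Σ_n x_n ≤ Z}. If Σ_n x'_n > Z, then the Euclidean projection X* of v onto S satisfies Σ_n x*_n = Z. -/
open Finset

private lemma clip_sq (a w : ℝ) (h0 : 0 ≤ w) (h1 : w ≤ 1) :
    (a - min 1 (max 0 a))^2 ≤ (a - w)^2 := by
  rcases le_total a 0 with h | h
  · rw [max_eq_left h, min_eq_right (by linarith)]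
    nlinarith
  · rcases le_total 1 a with h' | h'
    · rw [max_eq_right h, min_eq_left h']
      nlinarith
    · rw [max_eq_right h, min_eq_right h']
      nlinarith

private lemma box_proj (N : ℕ) (v X' : EuclideanSpace ℝ (Fin N))
    (hX' : ∀ n, X' n = min 1 (max 0 (v n)))
    (w : EuclideanSpace ℝ (Fin N)) (hw : ∀ n, 0 ≤ w n ∧ w n ≤ 1) :
    ‖v - X'‖ ≤ ‖v - w‖ := by
  rw [EuclideanSpace.norm_eq, EuclideanSpace.norm_eq]
  apply Real.sqrt_le_sqrt
  apply Finset.sum_le_sum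
  intro n _
  simp only [PiLp.sub_apply, Real.norm_eq_abs, sq_abs]
  rw [hX' n]
  exact clip_sq (v n) (w n) (hw n).1 (hw n).2

/-- Projection onto the capacitated box `S = {X : 0 ≤ x_n ≤ 1, ∑ x_n ≤ Z}`:
if the coordinatewise clipping `x'` of `v` to `[0,1]` satisfies `∑ x'_n ≤ Z` then it
is the Euclidean projection of `v` onto `S`; otherwise the Euclidean projection `X*`
satisfies `∑ x*_n = Z`. -/
theorem stmt_15 (N : ℕ) (Z : ℝ) (hZ : 0 ≤ Z)
    (v X' : EuclideanSpace ℝ (Fin N))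
    (hX' : ∀ n, X' n = min 1 (max 0 (v n))) :
    ((∑ n, X' n ≤ Z) →
      X' ∈ {X : EuclideanSpace ℝ (Fin N) | (∀ n, 0 ≤ X n ∧ X n ≤ 1) ∧ ∑ n, X n ≤ Z} ∧
        ∀ w ∈ {X : EuclideanSpace ℝ (Fin N) | (∀ n, 0 ≤ X n ∧ X n ≤ 1) ∧ ∑ n, X n ≤ Z},
          ‖v - X'‖ ≤ ‖v - w‖) ∧
    ((Z < ∑ n, X' n) →
      ∀ Xstar : EuclideanSpace ℝ (Fin N),
        (Xstar ∈ {X : EuclideanSpace ℝ (Fin N) | (∀ n, 0 ≤ X n ∧ X n ≤ 1) ∧ ∑ n, X n ≤ Z} ∧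
          ∀ w ∈ {X : EuclideanSpace ℝ (Fin N) | (∀ n, 0 ≤ X n ∧ X n ≤ 1) ∧ ∑ n, X n ≤ Z},
            ‖v - Xstar‖ ≤ ‖v - w‖) →
        ∑ n, Xstar n = Z) := by
  have hX'box : ∀ n, 0 ≤ X' n ∧ X' n ≤ 1 := by
    intro n
    rw [hX' n]
    constructor
    · exact le_min (by norm_num) (le_max_left 0 (v n))
    · exact min_le_left _ _
  constructor
  · intro hsum
    refine ⟨⟨hX'box, hsum⟩, ?_⟩
    intro w hw
    exact box_proj N v X' hX' w hw.1
  · intro hgt Xstar ⟨⟨hbox, hsumle⟩, hopt⟩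
    by_contra hne
    have hlt : ∑ n, Xstar n < Z := lt_of_le_of_ne hsumle hne
    set s := ∑ n, Xstar n with hs
    set S' := ∑ n, X' n with hS'
    have hSs : 0 < S' - s := by linarith
    set t : ℝ := min ((Z - s) / (S' - s)) (1/2) with ht
    have ht0 : 0 < t := lt_min (div_pos (by linarith) hSs) (by norm_num)
    have ht1 : t ≤ 1/2 := min_le_right _ _
    set d : EuclideanSpace ℝ (Fin N) := X' - Xstar with hd
    set w : EuclideanSpace ℝ (Fin N) := Xstar + t • d with hwdef
    have hwn : ∀ n, w n = Xstar n + t * (X' n - Xstar n) := by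
      intro n
      simp [hwdef, hd, PiLp.add_apply, PiLp.smul_apply, PiLp.sub_apply, smul_eq_mul]
    -- w is in the box
    have hwbox : ∀ n, 0 ≤ w n ∧ w n ≤ 1 := by
      intro n
      rw [hwn n]
      have h1 := (hbox n).1
      have h2 := (hbox n).2
      have h3 := (hX'box n).1
      have h4 := (hX'box n).2
      constructor <;> nlinarith
    -- sum of w
    have hwsum : ∑ n, w n = s + t * (S' - s) := by
      simp only [hwn]
      rw [Finset.sum_add_distrib, ← Finset.mul_sum, Finset.sum_sub_distrib]
    have hwsumle : ∑ n, w n ≤ Z := by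
      rw [hwsum]
      have : t * (S' - s) ≤ (Z - s) / (S' - s) * (S' - s) :=
        mul_le_mul_of_nonneg_right (min_le_left _ _) (le_of_lt hSs)
      rw [div_mul_cancel₀ _ (ne_of_gt hSs)] at this
      linarith
    -- d ≠ 0
    have hdsum : ∑ n, d n = S' - s := by
      simp only [hd, PiLp.sub_apply]
      rw [Finset.sum_sub_distrib]
    have hdne : d ≠ 0 := by
      intro h
      rw [h] at hdsum
      simp at hdsum
      linarith
    have hdnorm : 0 < ‖d‖ := norm_pos_iff.mpr hdne
    -- key inequality from box projection
    have hkey : ‖v - X'‖ ≤ ‖v - Xstar‖ := box_proj N v X' hX' Xstar hbox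
    set a : EuclideanSpace ℝ (Fin N) := v - Xstar with ha
    have hvX' : v - X' = a - d := by
      rw [ha, hd, sub_sub_sub_cancel_right]
    have hinner : ‖d‖^2 ≤ 2 * inner ℝ a d := by
      have h2 : ‖a - d‖^2 ≤ ‖a‖^2 := by
        rw [← hvX']
        exact pow_le_pow_left₀ (norm_nonneg _) hkey 2
      rw [@norm_sub_sq_real] at h2
      linarith
    have hvw : v - w = a - t • d := sub_add_eq_sub_sub v Xstar (t • d)
    have hlt2 : ‖v - w‖^2 < ‖v - Xstar‖^2 := by
      rw [hvw, ← ha, @norm_sub_sq_real, real_inner_smul_right, norm_smul,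
        Real.norm_eq_abs, abs_of_pos ht0, mul_pow]
      have hd2 : 0 < ‖d‖^2 := by positivity
      nlinarith [mul_le_mul_of_nonneg_left hinner ht0.le,
        mul_le_mul_of_nonneg_right ht1 (mul_pos ht0 hd2).le, mul_pos ht0 hd2]
    have : ‖v - w‖ < ‖v - Xstar‖ := lt_of_pow_lt_pow_left₀ 2 (norm_nonneg _) hlt2
    have hcontra := hopt w ⟨hwbox, hwsumle⟩
    linarith
end
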